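/- If a monomial x⊗y⊗z ∈ A⊗A⊗A is a canonical R-matrix (i.e. it is invertible in A⊗A⊗A and satisfies the three centralizing conditions and the two hexagon identities), then x = y = z = 1. -/

import Mathlib

open TensorProduct

section Aux

variable (k A : Type*) [CommRing k] [Ring A] [Algebra k A]

/-- Multiply all three tensor factors. -/
noncomputable def rmatMu3 : (A ⊗[k] A) ⊗[k] A →ₗ[k] A :=
  (LinearMap.mul' k A) ∘ₗ (LinearMap.rTensor A (LinearMap.mul' k A))

@[simp] lemma rmatMu3_tmul (a b c : A) :
    rmatMu3 k A (a ⊗ₜ[k] b ⊗ₜ[k] c) = a * (b * c) := by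
  simp [rmatMu3, LinearMap.mul'_apply, mul_assoc]

/-- Multiply tensor factors 3 and 4 of a fourfold tensor product. -/
noncomputable def rmatQ34 : ((A ⊗[k] A) ⊗[k] A) ⊗[k] A →ₗ[k] (A ⊗[k] A) ⊗[k] A :=
  (LinearMap.lTensor (A ⊗[k] A) (LinearMap.mul' k A)) ∘ₗ
    (TensorProduct.assoc k (A ⊗[k] A) A A).toLinearMap

@[simp] lemma rmatQ34_tmul (a b c d : A) :
    rmatQ34 k A (a ⊗ₜ[k] b ⊗ₜ[k] c ⊗ₜ[k] d) = a ⊗ₜ[k] b ⊗ₜ[k] (c * d) := by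
  simp [rmatQ34, LinearMap.mul'_apply]

/-- Multiply tensor factors 1 and 2 of a fourfold tensor product. -/
noncomputable def rmatQ12 : ((A ⊗[k] A) ⊗[k] A) ⊗[k] A →ₗ[k] (A ⊗[k] A) ⊗[k] A :=
  LinearMap.rTensor A (LinearMap.rTensor A (LinearMap.mul' k A))

@[simp] lemma rmatQ12_tmul (a b c d : A) :
    rmatQ12 k A (a ⊗ₜ[k] b ⊗ₜ[k] c ⊗ₜ[k] d) = (a * b) ⊗ₜ[k] c ⊗ₜ[k] d := by
  simp [rmatQ12, LinearMap.mul'_apply]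

/-- Multiply tensor factors 2 and 3 of a fourfold tensor product. -/
noncomputable def rmatQ23 : ((A ⊗[k] A) ⊗[k] A) ⊗[k] A →ₗ[k] (A ⊗[k] A) ⊗[k] A :=
  LinearMap.rTensor A ((LinearMap.lTensor A (LinearMap.mul' k A)) ∘ₗ
    (TensorProduct.assoc k A A A).toLinearMap)

@[simp] lemma rmatQ23_tmul (a b c d : A) :
    rmatQ23 k A (a ⊗ₜ[k] b ⊗ₜ[k] c ⊗ₜ[k] d) = a ⊗ₜ[k] (b * c) ⊗ₜ[k] d := by
  simp [rmatQ23, LinearMap.mul'_apply]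

end Aux

/-- If a monomial `x ⊗ y ⊗ z ∈ A ⊗ A ⊗ A` is a canonical R-matrix (it is
invertible in `A ⊗ A ⊗ A` and satisfies the three centralizing conditions and the two
hexagon identities, with the second copy `r` of `R` equal to `x ⊗ y ⊗ z` as well), then
it is equal to `1 ⊗ 1 ⊗ 1`. -/
theorem monomial_canonical_R_matrix_is_trivial
    (k A : Type*) [CommRing k] [Ring A] [Algebra k A]
    (x y z : A)
    (hunit : IsUnit (x ⊗ₜ[k] y ⊗ₜ[k] z))
    (hcen3 : ∀ a : A, x ⊗ₜ[k] y ⊗ₜ[k] (a * z) = (x * a) ⊗ₜ[k] y ⊗ₜ[k] z)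
    (hcen1 : ∀ a : A, (a * x) ⊗ₜ[k] y ⊗ₜ[k] z = x ⊗ₜ[k] (y * a) ⊗ₜ[k] z)
    (hcen2 : ∀ a : A, x ⊗ₜ[k] (a * y) ⊗ₜ[k] z = x ⊗ₜ[k] y ⊗ₜ[k] (z * a))
    (hhex1 : x ⊗ₜ[k] y ⊗ₜ[k] (1 : A) ⊗ₜ[k] z
      = (x * x) ⊗ₜ[k] y ⊗ₜ[k] (z * y) ⊗ₜ[k] z)
    (hhex2 : x ⊗ₜ[k] (1 : A) ⊗ₜ[k] y ⊗ₜ[k] z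
      = x ⊗ₜ[k] (y * x) ⊗ₜ[k] y ⊗ₜ[k] (z * z)) :
    x ⊗ₜ[k] y ⊗ₜ[k] z = (1 : A) ⊗ₜ[k] (1 : A) ⊗ₜ[k] (1 : A) := by
  set R : A ⊗[k] A ⊗[k] A := x ⊗ₜ[k] y ⊗ₜ[k] z with hRdef
  -- cancellation lemmas from invertibility
  have rcancel : ∀ S : A ⊗[k] A ⊗[k] A, S * R = R → S = 1 := by
    intro S h
    exact hunit.mul_right_cancel (by rw [one_mul]; exact h)
  have lcancel : ∀ S : A ⊗[k] A ⊗[k] A, R * S = R → S = 1 := by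
    intro S h
    exact hunit.mul_left_cancel (by rw [mul_one]; exact h)
  -- ring forms of the centralizing conditions
  have hc1 : ∀ a : A, (a ⊗ₜ[k] (1:A) ⊗ₜ[k] (1:A)) * R = R * ((1:A) ⊗ₜ[k] a ⊗ₜ[k] (1:A)) := by
    intro a; simpa [hRdef] using hcen1 a
  have hc2 : ∀ a : A, ((1:A) ⊗ₜ[k] a ⊗ₜ[k] (1:A)) * R = R * ((1:A) ⊗ₜ[k] (1:A) ⊗ₜ[k] a) := by
    intro a; simpa [hRdef] using hcen2 a
  have hc3 : ∀ a : A, ((1:A) ⊗ₜ[k] (1:A) ⊗ₜ[k] a) * R = R * (a ⊗ₜ[k] (1:A) ⊗ₜ[k] (1:A)) := by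
    intro a; simpa [hRdef] using hcen3 a
  -- conjugation by R cyclically permutes the slots of an elementary tensor
  have conj : ∀ a b c : A,
      (a ⊗ₜ[k] b ⊗ₜ[k] c) * R = R * (c ⊗ₜ[k] a ⊗ₜ[k] b) := by
    intro a b c
    calc (a ⊗ₜ[k] b ⊗ₜ[k] c) * R
        = (a ⊗ₜ[k] (1:A) ⊗ₜ[k] (1:A)) * (((1:A) ⊗ₜ[k] b ⊗ₜ[k] (1:A)) *
            ((((1:A) ⊗ₜ[k] (1:A) ⊗ₜ[k] c)) * R)) := by
          rw [← mul_assoc, ← mul_assoc]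
          simp
      _ = (a ⊗ₜ[k] (1:A) ⊗ₜ[k] (1:A)) * (((1:A) ⊗ₜ[k] b ⊗ₜ[k] (1:A)) *
            (R * (c ⊗ₜ[k] (1:A) ⊗ₜ[k] (1:A)))) := by rw [hc3 c]
      _ = (a ⊗ₜ[k] (1:A) ⊗ₜ[k] (1:A)) * ((((1:A) ⊗ₜ[k] b ⊗ₜ[k] (1:A)) * R) *
            (c ⊗ₜ[k] (1:A) ⊗ₜ[k] (1:A))) := by rw [mul_assoc]
      _ = (a ⊗ₜ[k] (1:A) ⊗ₜ[k] (1:A)) * ((R * ((1:A) ⊗ₜ[k] (1:A) ⊗ₜ[k] b)) *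
            (c ⊗ₜ[k] (1:A) ⊗ₜ[k] (1:A))) := by rw [hc2 b]
      _ = ((a ⊗ₜ[k] (1:A) ⊗ₜ[k] (1:A)) * R) * (((1:A) ⊗ₜ[k] (1:A) ⊗ₜ[k] b) *
            (c ⊗ₜ[k] (1:A) ⊗ₜ[k] (1:A))) := by rw [← mul_assoc, ← mul_assoc, mul_assoc]
      _ = (R * ((1:A) ⊗ₜ[k] a ⊗ₜ[k] (1:A))) * (((1:A) ⊗ₜ[k] (1:A) ⊗ₜ[k] b) *
            (c ⊗ₜ[k] (1:A) ⊗ₜ[k] (1:A))) := by rw [hc1 a]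
      _ = R * (c ⊗ₜ[k] a ⊗ₜ[k] b) := by
          rw [mul_assoc, ← mul_assoc ((1:A) ⊗ₜ[k] a ⊗ₜ[k] (1:A))]
          simp
  -- collapses of the hexagon identities give unit factors
  have hA1 : x ⊗ₜ[k] (1:A) ⊗ₜ[k] (z * y) = 1 := by
    apply rcancel
    have e := congrArg (rmatQ34 k A) hhex1
    simp only [rmatQ34_tmul, one_mul] at e
    rw [hRdef]
    simp only [Algebra.TensorProduct.tmul_mul_tmul, one_mul]
    exact e.symm
  have hA2 : (x * y) ⊗ₜ[k] (1:A) ⊗ₜ[k] z = 1 := by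
    apply rcancel
    have e := congrArg (rmatQ12 k A) hhex2
    simp only [rmatQ12_tmul, mul_one] at e
    rw [hRdef]
    simp only [Algebra.TensorProduct.tmul_mul_tmul, one_mul, mul_assoc] at e ⊢
    exact e.symm
  have hA3 : (1:A) ⊗ₜ[k] (y * x) ⊗ₜ[k] z = 1 := by
    apply rcancel
    have e := congrArg (rmatQ23 k A) hhex2
    simp only [rmatQ23_tmul, one_mul] at e
    rw [hRdef]
    simp only [Algebra.TensorProduct.tmul_mul_tmul, one_mul, mul_assoc] at e ⊢
    exact e.symm
  -- cyclic shifts of those unit factors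
  have hB1 : (z * y) ⊗ₜ[k] x ⊗ₜ[k] (1:A) = 1 := by
    apply lcancel
    have h := conj x (1:A) (z * y)
    rw [hA1, one_mul] at h
    exact h.symm
  have hB2 : z ⊗ₜ[k] (x * y) ⊗ₜ[k] (1:A) = 1 := by
    apply lcancel
    have h := conj (x * y) (1:A) z
    rw [hA2, one_mul] at h
    exact h.symm
  have hB3 : z ⊗ₜ[k] (1:A) ⊗ₜ[k] (y * x) = 1 := by
    apply lcancel
    have h := conj (1:A) (y * x) z
    rw [hA3, one_mul] at h
    exact h.symm
  have hC1 : (1:A) ⊗ₜ[k] (z * y) ⊗ₜ[k] x = 1 := by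
    apply lcancel
    have h := conj (z * y) x (1:A)
    rw [hB1, one_mul] at h
    exact h.symm
  -- element identities obtained by multiplying out
  have one3 : (1 : A ⊗[k] A ⊗[k] A) = (1:A) ⊗ₜ[k] (1:A) ⊗ₜ[k] (1:A) := by
    rw [Algebra.TensorProduct.one_def, Algebra.TensorProduct.one_def]
  have m1 : x * (z * y) = 1 := by
    have e := congrArg (rmatMu3 k A) (hA1.trans one3)
    simpa using e
  have m1' : z * y * x = 1 := by
    have e := congrArg (rmatMu3 k A) (hB1.trans one3)
    simpa [mul_assoc] using e
  have m2 : x * y * z = 1 := by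
    have e := congrArg (rmatMu3 k A) (hA2.trans one3)
    simpa [mul_assoc] using e
  have m3' : z * (y * x) = 1 := by
    have e := congrArg (rmatMu3 k A) (hB3.trans one3)
    simpa using e
  -- slot-moving identities
  have Fa : x ⊗ₜ[k] (1:A) ⊗ₜ[k] (1:A) = (1:A) ⊗ₜ[k] (1:A) ⊗ₜ[k] x := by
    calc x ⊗ₜ[k] (1:A) ⊗ₜ[k] (1:A)
        = (x ⊗ₜ[k] (1:A) ⊗ₜ[k] (z * y)) * ((1:A) ⊗ₜ[k] (1:A) ⊗ₜ[k] x) := by simp [m1']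
      _ = 1 * ((1:A) ⊗ₜ[k] (1:A) ⊗ₜ[k] x) := by rw [hA1]
      _ = (1:A) ⊗ₜ[k] (1:A) ⊗ₜ[k] x := one_mul _
  have Fb : (1:A) ⊗ₜ[k] z ⊗ₜ[k] (1:A) = (1:A) ⊗ₜ[k] (1:A) ⊗ₜ[k] z := by
    calc (1:A) ⊗ₜ[k] z ⊗ₜ[k] (1:A)
        = ((1:A) ⊗ₜ[k] z ⊗ₜ[k] (1:A)) * 1 := (mul_one _).symm
      _ = ((1:A) ⊗ₜ[k] z ⊗ₜ[k] (1:A)) * ((1:A) ⊗ₜ[k] (y * x) ⊗ₜ[k] z) := by rw [hA3]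
      _ = (1:A) ⊗ₜ[k] (1:A) ⊗ₜ[k] z := by simp [m3']
  have Fc : (1:A) ⊗ₜ[k] (z * y) ⊗ₜ[k] (1:A) = (1:A) ⊗ₜ[k] (1:A) ⊗ₜ[k] (z * y) := by
    calc (1:A) ⊗ₜ[k] (z * y) ⊗ₜ[k] (1:A)
        = ((1:A) ⊗ₜ[k] (z * y) ⊗ₜ[k] x) * ((1:A) ⊗ₜ[k] (1:A) ⊗ₜ[k] (z * y)) := by simp [m1]
      _ = 1 * ((1:A) ⊗ₜ[k] (1:A) ⊗ₜ[k] (z * y)) := by rw [hC1]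
      _ = (1:A) ⊗ₜ[k] (1:A) ⊗ₜ[k] (z * y) := one_mul _
  have G : (1:A) ⊗ₜ[k] (x * y) ⊗ₜ[k] z = (1:A) ⊗ₜ[k] (1:A) ⊗ₜ[k] (1:A) := by
    calc (1:A) ⊗ₜ[k] (x * y) ⊗ₜ[k] z
        = ((1:A) ⊗ₜ[k] (x * y) ⊗ₜ[k] (1:A)) * ((1:A) ⊗ₜ[k] (1:A) ⊗ₜ[k] z) := by simp
      _ = ((1:A) ⊗ₜ[k] (x * y) ⊗ₜ[k] (1:A)) * ((1:A) ⊗ₜ[k] z ⊗ₜ[k] (1:A)) := by rw [← Fb]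
      _ = (1:A) ⊗ₜ[k] (x * y * z) ⊗ₜ[k] (1:A) := by simp
      _ = (1:A) ⊗ₜ[k] (1:A) ⊗ₜ[k] (1:A) := by rw [m2]
  have Fd : (1:A) ⊗ₜ[k] y ⊗ₜ[k] (1:A) = (1:A) ⊗ₜ[k] (1:A) ⊗ₜ[k] y := by
    have h1 : x * y * (z * y) = y := by
      rw [← mul_assoc (x * y) z y, m2, one_mul]
    calc (1:A) ⊗ₜ[k] y ⊗ₜ[k] (1:A)
        = (1:A) ⊗ₜ[k] (x * y * (z * y)) ⊗ₜ[k] (1:A) := by rw [h1]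
      _ = ((1:A) ⊗ₜ[k] (x * y) ⊗ₜ[k] (1:A)) * ((1:A) ⊗ₜ[k] (z * y) ⊗ₜ[k] (1:A)) := by simp
      _ = ((1:A) ⊗ₜ[k] (x * y) ⊗ₜ[k] (1:A)) * ((1:A) ⊗ₜ[k] (1:A) ⊗ₜ[k] (z * y)) := by rw [Fc]
      _ = (1:A) ⊗ₜ[k] (x * y) ⊗ₜ[k] (z * y) := by simp
      _ = ((1:A) ⊗ₜ[k] (x * y) ⊗ₜ[k] z) * ((1:A) ⊗ₜ[k] (1:A) ⊗ₜ[k] y) := by simp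
      _ = ((1:A) ⊗ₜ[k] (1:A) ⊗ₜ[k] (1:A)) * ((1:A) ⊗ₜ[k] (1:A) ⊗ₜ[k] y) := by rw [G]
      _ = (1:A) ⊗ₜ[k] (1:A) ⊗ₜ[k] y := by simp
  -- final computation
  calc x ⊗ₜ[k] y ⊗ₜ[k] z
      = (x ⊗ₜ[k] (1:A) ⊗ₜ[k] (1:A)) * ((1:A) ⊗ₜ[k] y ⊗ₜ[k] (1:A)) *
          ((1:A) ⊗ₜ[k] (1:A) ⊗ₜ[k] z) := by simp
    _ = ((1:A) ⊗ₜ[k] (1:A) ⊗ₜ[k] x) * ((1:A) ⊗ₜ[k] (1:A) ⊗ₜ[k] y) *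
          ((1:A) ⊗ₜ[k] (1:A) ⊗ₜ[k] z) := by rw [Fa, Fd]
    _ = (1:A) ⊗ₜ[k] (1:A) ⊗ₜ[k] (x * y * z) := by simp
    _ = (1:A) ⊗ₜ[k] (1:A) ⊗ₜ[k] (1:A) := by rw [m2]
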